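/- Let J ⊆ ℝ be an interval and let A(ξ) be a family of n×n Hermitian matrices depending C¹ on ξ ∈ J, such that the derivative satisfies ∂_ξ A(ξ) ≥ β·I for some β > 0 (in the sense of quadratic forms). Then for any α > 0, the Lebesgue measure of the set {ξ ∈ J : A(ξ) is not invertible, or ‖A(ξ)⁻¹‖ ≥ α⁻¹} is at most 2·n·α·β⁻¹. -/

import Mathlib

open MeasureTheory Finset

noncomputable section MSILAux

namespace MSIL

variable {n : ℕ}

lemma repr_clm {B : Matrix (Fin n) (Fin n) ℂ} (hB : B.IsHermitian)
    (v : EuclideanSpace ℂ (Fin n)) (i : Fin n) :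
    hB.eigenvectorBasis.repr ((Matrix.toEuclideanCLM (𝕜 := ℂ) B) v) i
      = hB.eigenvalues i * hB.eigenvectorBasis.repr v i := by
  have hsym : (Matrix.toEuclideanLin B).IsSymmetric :=
    Matrix.isHermitian_iff_isSymmetric.mp hB
  have happ : (Matrix.toEuclideanCLM (𝕜 := ℂ) B) (hB.eigenvectorBasis i)
      = (hB.eigenvalues i : ℂ) • hB.eigenvectorBasis i := by
    apply (WithLp.equiv 2 _).injective
    simp only [Matrix.ofLp_toEuclideanCLM]
    have := hB.mulVec_eigenvectorBasis i
    simpa [Matrix.toLin'_apply] using this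
  rw [OrthonormalBasis.repr_apply_apply, OrthonormalBasis.repr_apply_apply]
  calc inner ℂ (hB.eigenvectorBasis i) ((Matrix.toEuclideanCLM (𝕜 := ℂ) B) v)
      = inner ℂ ((Matrix.toEuclideanCLM (𝕜 := ℂ) B) (hB.eigenvectorBasis i)) v := by
        rw [← Matrix.coe_toEuclideanCLM_eq_toEuclideanLin] at hsym
        exact (hsym (hB.eigenvectorBasis i) v).symm
    _ = (hB.eigenvalues i : ℂ) * inner ℂ (hB.eigenvectorBasis i) v := by
        rw [happ, inner_smul_left]
        simp [Complex.conj_ofReal]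

lemma inner_repr (v w : EuclideanSpace ℂ (Fin n)) {B : Matrix (Fin n) (Fin n) ℂ}
    (hB : B.IsHermitian) :
    (inner ℂ v w : ℂ)
      = ∑ i, (starRingEnd ℂ) (hB.eigenvectorBasis.repr v i) * hB.eigenvectorBasis.repr w i := by
  rw [← hB.eigenvectorBasis.repr.inner_map_map v w]
  rw [PiLp.inner_apply]
  simp only [RCLike.inner_apply']

lemma normsq_repr {B : Matrix (Fin n) (Fin n) ℂ} (hB : B.IsHermitian)
    (v : EuclideanSpace ℂ (Fin n)) :
    ‖v‖ ^ 2 = ∑ i, ‖hB.eigenvectorBasis.repr v i‖ ^ 2 := by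
  rw [← hB.eigenvectorBasis.repr.norm_map v, EuclideanSpace.norm_eq]
  rw [Real.sq_sqrt (by positivity)]

lemma quad_repr {B : Matrix (Fin n) (Fin n) ℂ} (hB : B.IsHermitian)
    (v : EuclideanSpace ℂ (Fin n)) :
    (inner ℂ ((Matrix.toEuclideanCLM (𝕜 := ℂ) B) v) v : ℂ).re
      = ∑ i, hB.eigenvalues i * ‖hB.eigenvectorBasis.repr v i‖ ^ 2 := by
  rw [inner_repr _ _ hB, Complex.re_sum]
  congr 1; ext i
  rw [repr_clm hB v i, _root_.map_mul, Complex.conj_ofReal, mul_assoc,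
    mul_comm ((starRingEnd ℂ) (hB.eigenvectorBasis.repr v i)), Complex.mul_conj']
  rw [← Complex.ofReal_pow, ← Complex.ofReal_mul, Complex.ofReal_re]

lemma normsq_clm_repr {B : Matrix (Fin n) (Fin n) ℂ} (hB : B.IsHermitian)
    (v : EuclideanSpace ℂ (Fin n)) :
    ‖(Matrix.toEuclideanCLM (𝕜 := ℂ) B) v‖ ^ 2
      = ∑ i, (hB.eigenvalues i) ^ 2 * ‖hB.eigenvectorBasis.repr v i‖ ^ 2 := by
  rw [normsq_repr hB]
  congr 1; ext i
  rw [repr_clm hB v i, norm_mul, mul_pow, Complex.norm_real, Real.norm_eq_abs, sq_abs]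

lemma mem_span_repr_eq_zero {B : Matrix (Fin n) (Fin n) ℂ} (hB : B.IsHermitian)
    (T : Finset (Fin n)) {v : EuclideanSpace ℂ (Fin n)}
    (hv : v ∈ Submodule.span ℂ (hB.eigenvectorBasis '' T)) {i : Fin n} (hi : i ∉ T) :
    hB.eigenvectorBasis.repr v i = 0 := by
  induction hv using Submodule.span_induction with
  | mem x hx =>
    obtain ⟨j, hj, rfl⟩ := hx
    rw [hB.eigenvectorBasis.repr_self]
    have : i ≠ j := fun h => hi (h ▸ hj)
    simp [EuclideanSpace.single_apply, this]
  | zero => simp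
  | add x y _ _ hx hy => rw [map_add]; simp [hx, hy]
  | smul a x _ hx => rw [_root_.map_smul]; simp [hx]

lemma finrank_span_eigen {B : Matrix (Fin n) (Fin n) ℂ} (hB : B.IsHermitian)
    (T : Finset (Fin n)) :
    Module.finrank ℂ (Submodule.span ℂ (hB.eigenvectorBasis '' T)) = T.card := by
  have hli : LinearIndependent ℂ (fun i : T => hB.eigenvectorBasis i) :=
    (hB.eigenvectorBasis.orthonormal.linearIndependent).comp _ Subtype.val_injective
  have : (hB.eigenvectorBasis '' T) = Set.range (fun i : T => hB.eigenvectorBasis i) := by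
    ext x; simp [Set.mem_image]
  rw [this, finrank_span_eq_card hli]
  simp

lemma quad_lt_of_mem_span {B : Matrix (Fin n) (Fin n) ℂ} (hB : B.IsHermitian) (c : ℝ)
    {v : EuclideanSpace ℂ (Fin n)}
    (hv : v ∈ Submodule.span ℂ
      (hB.eigenvectorBasis '' (univ.filter fun i => c < hB.eigenvalues i)))
    (hv0 : v ≠ 0) :
    c * ‖v‖ ^ 2 < (inner ℂ ((Matrix.toEuclideanCLM (𝕜 := ℂ) B) v) v : ℂ).re := by
  set T : Finset (Fin n) := univ.filter fun i => c < hB.eigenvalues i with hT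
  rw [quad_repr hB v, normsq_repr hB v, Finset.mul_sum]
  have hne : ∃ i₀, hB.eigenvectorBasis.repr v i₀ ≠ 0 := by
    by_contra h
    push_neg at h
    apply hv0
    apply hB.eigenvectorBasis.repr.injective
    ext i; simp [h i]
  obtain ⟨i₀, hi₀⟩ := hne
  have hi₀T : i₀ ∈ T := by
    by_contra h
    exact hi₀ (mem_span_repr_eq_zero hB T hv h)
  apply Finset.sum_lt_sum
  · intro i _
    by_cases hiT : i ∈ T
    · have : c < hB.eigenvalues i := by simpa [hT] using hiT
      exact mul_le_mul_of_nonneg_right this.le (by positivity)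
    · rw [mem_span_repr_eq_zero hB T hv hiT]; simp
  · refine ⟨i₀, Finset.mem_univ i₀, ?_⟩
    have h1 : c < hB.eigenvalues i₀ := by simpa [hT] using hi₀T
    have h2 : (0:ℝ) < ‖hB.eigenvectorBasis.repr v i₀‖ ^ 2 := pow_pos (norm_pos_iff.mpr hi₀) 2
    exact mul_lt_mul_of_pos_right h1 h2

lemma quad_le_of_mem_span {B : Matrix (Fin n) (Fin n) ℂ} (hB : B.IsHermitian) (c : ℝ)
    {v : EuclideanSpace ℂ (Fin n)}
    (hv : v ∈ Submodule.span ℂ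
      (hB.eigenvectorBasis '' (univ.filter fun i => ¬ c < hB.eigenvalues i))) :
    (inner ℂ ((Matrix.toEuclideanCLM (𝕜 := ℂ) B) v) v : ℂ).re ≤ c * ‖v‖ ^ 2 := by
  set T : Finset (Fin n) := univ.filter fun i => ¬ c < hB.eigenvalues i with hT
  rw [quad_repr hB v, normsq_repr hB v, Finset.mul_sum]
  apply Finset.sum_le_sum
  intro i _
  by_cases hiT : i ∈ T
  · have h5 : ¬ c < hB.eigenvalues i := by simpa [hT] using hiT
    exact mul_le_mul_of_nonneg_right (le_of_not_gt h5) (by positivity)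
  · rw [mem_span_repr_eq_zero hB T hv hiT]; simp

lemma count_le {B C : Matrix (Fin n) (Fin n) ℂ} (hB : B.IsHermitian) (hC : C.IsHermitian)
    {c c' d : ℝ} (hcd : c' ≤ c + d)
    (h : ∀ v : EuclideanSpace ℂ (Fin n),
      (inner ℂ ((Matrix.toEuclideanCLM (𝕜 := ℂ) C) v) v : ℂ).re + d * ‖v‖ ^ 2
        ≤ (inner ℂ ((Matrix.toEuclideanCLM (𝕜 := ℂ) B) v) v : ℂ).re) :
    (univ.filter fun i => c < hC.eigenvalues i).card
      ≤ (univ.filter fun i => c' < hB.eigenvalues i).card := by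
  classical
  set T : Finset (Fin n) := univ.filter fun i => c < hC.eigenvalues i
  set S : Finset (Fin n) := univ.filter fun i => ¬ c' < hB.eigenvalues i
  set W := Submodule.span ℂ (hC.eigenvectorBasis '' T)
  set V := Submodule.span ℂ (hB.eigenvectorBasis '' S)
  have hdisj : Disjoint W V := by
    rw [Submodule.disjoint_def]
    intro v hvW hvV
    by_contra hv0
    have h1 := quad_lt_of_mem_span hC c hvW hv0
    have h2 := quad_le_of_mem_span hB c' hvV
    have h3 := h v
    have h4 : (0:ℝ) < ‖v‖ ^ 2 := by
      have : ‖v‖ ≠ 0 := norm_ne_zero_iff.mpr hv0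
      positivity
    nlinarith
  have hfin := Submodule.finrank_add_finrank_le_of_disjoint hdisj
  rw [finrank_span_eigen hC T, finrank_span_eigen hB S] at hfin
  have hdim : Module.finrank ℂ (EuclideanSpace ℂ (Fin n)) = n := finrank_euclideanSpace_fin
  rw [hdim] at hfin
  have hSs : S.card + (univ.filter fun i => c' < hB.eigenvalues i).card = n := by
    rw [add_comm]
    have := Finset.card_filter_add_card_filter_not
      (s := (univ : Finset (Fin n))) (p := fun i => c' < hB.eigenvalues i)
    simp only [Finset.card_univ, Fintype.card_fin] at this
    convert this using 3
  omega

lemma exists_max_sphere (hn : 0 < n)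
    (T : EuclideanSpace ℂ (Fin n) →L[ℂ] EuclideanSpace ℂ (Fin n)) :
    ∃ w, ‖w‖ = 1 ∧ ‖T‖ ≤ ‖T w‖ := by
  have hne : (Metric.sphere (0 : EuclideanSpace ℂ (Fin n)) 1).Nonempty := by
    refine ⟨EuclideanSpace.single ⟨0, hn⟩ 1, ?_⟩
    simp [EuclideanSpace.norm_single]
  have hcpt : IsCompact (Metric.sphere (0 : EuclideanSpace ℂ (Fin n)) 1) :=
    isCompact_sphere _ _
  obtain ⟨w, hw, hmax⟩ := hcpt.exists_isMaxOn hne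
    ((continuous_norm.comp T.continuous).continuousOn)
  refine ⟨w, by simpa using hw, ?_⟩
  apply T.opNorm_le_bound (norm_nonneg _)
  intro v
  rcases eq_or_ne v 0 with rfl | hv
  · simp
  · have hvn : (0:ℝ) < ‖v‖ := norm_pos_iff.mpr hv
    have hu : (‖v‖⁻¹ • v) ∈ Metric.sphere (0 : EuclideanSpace ℂ (Fin n)) 1 := by
      simp [norm_smul, abs_of_pos (inv_pos.mpr hvn), inv_mul_cancel₀ hvn.ne']
    have := hmax hu
    simp only [Function.comp_apply, Set.mem_setOf_eq] at this
    have h2 : ‖T (‖v‖⁻¹ • v)‖ = ‖v‖⁻¹ * ‖T v‖ := by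
      rw [T.map_smul_of_tower, norm_smul]
      simp [abs_of_pos (inv_pos.mpr hvn)]
    rw [h2] at this
    calc ‖T v‖ = ‖v‖ * (‖v‖⁻¹ * ‖T v‖) := by field_simp
    _ ≤ ‖v‖ * ‖T w‖ := mul_le_mul_of_nonneg_left this hvn.le
    _ = ‖T w‖ * ‖v‖ := mul_comm _ _

lemma small_vec_exists {M : Matrix (Fin n) (Fin n) ℂ} {α : ℝ} (hα : 0 < α) (hn : 0 < n)
    (hbad : ¬ IsUnit M ∨ α⁻¹ ≤ ‖(Matrix.toEuclideanCLM (𝕜 := ℂ) (M⁻¹) :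
      EuclideanSpace ℂ (Fin n) →L[ℂ] EuclideanSpace ℂ (Fin n))‖) :
    ∃ v : EuclideanSpace ℂ (Fin n), v ≠ 0 ∧
      ‖(Matrix.toEuclideanCLM (𝕜 := ℂ) M) v‖ ≤ α * ‖v‖ := by
  classical
  by_cases hu : IsUnit M
  case neg =>
    have hdet : M.det = 0 := by
      by_contra h
      exact hu ((Matrix.isUnit_iff_isUnit_det M).mpr (isUnit_iff_ne_zero.mpr h))
    obtain ⟨v, hv0, hv⟩ := (Matrix.exists_mulVec_eq_zero_iff).mpr hdet
    refine ⟨(WithLp.equiv 2 _).symm v, ?_, ?_⟩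
    · simpa using hv0
    · have : (Matrix.toEuclideanCLM (𝕜 := ℂ) M) ((WithLp.equiv 2 _).symm v)
          = (WithLp.equiv 2 _).symm (Matrix.toLin' M v) := by
        simp
      rw [this, Matrix.toLin'_apply, hv]
      simp
      positivity
  case pos =>
    have hbad : α⁻¹ ≤ ‖(Matrix.toEuclideanCLM (𝕜 := ℂ) (M⁻¹) :
        EuclideanSpace ℂ (Fin n) →L[ℂ] EuclideanSpace ℂ (Fin n))‖ :=
      hbad.resolve_left (not_not.mpr hu)
    set T' := Matrix.toEuclideanCLM (𝕜 := ℂ) (M⁻¹) with hT'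
    obtain ⟨w, hw1, hww⟩ := exists_max_sphere hn T'
    have hT'w : α⁻¹ ≤ ‖T' w‖ := le_trans hbad hww
    refine ⟨T' w, ?_, ?_⟩
    · intro h
      rw [h] at hT'w
      simp at hT'w
      have : (0:ℝ) < α⁻¹ := inv_pos.mpr hα
      nlinarith
    · have hMdet : IsUnit M.det := (Matrix.isUnit_iff_isUnit_det M).mp hu
      have hmul : M * M⁻¹ = 1 := Matrix.mul_nonsing_inv M hMdet
      have hTv : (Matrix.toEuclideanCLM (𝕜 := ℂ) M) (T' w) = w := by
        have : (Matrix.toEuclideanCLM (𝕜 := ℂ) M) * T' = 1 := by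
          rw [hT', ← _root_.map_mul, hmul, _root_.map_one]
        calc (Matrix.toEuclideanCLM (𝕜 := ℂ) M) (T' w)
            = ((Matrix.toEuclideanCLM (𝕜 := ℂ) M) * T') w := rfl
          _ = w := by rw [this]; rfl
      rw [hTv, hw1]
      calc (1:ℝ) = α * α⁻¹ := by field_simp
        _ ≤ α * ‖T' w‖ := mul_le_mul_of_nonneg_left hT'w hα.le

lemma eigen_small_of_small_vec {M : Matrix (Fin n) (Fin n) ℂ} (hM : M.IsHermitian) {α : ℝ}
    (hα : 0 ≤ α) {v : EuclideanSpace ℂ (Fin n)} (hv : v ≠ 0)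
    (hsm : ‖(Matrix.toEuclideanCLM (𝕜 := ℂ) M) v‖ ≤ α * ‖v‖) :
    ∃ i, |hM.eigenvalues i| ≤ α := by
  by_contra h
  push_neg at h
  have hsq : ‖(Matrix.toEuclideanCLM (𝕜 := ℂ) M) v‖ ^ 2 ≤ α ^ 2 * ‖v‖ ^ 2 := by
    have h0 : (0:ℝ) ≤ ‖(Matrix.toEuclideanCLM (𝕜 := ℂ) M) v‖ := norm_nonneg _
    nlinarith [norm_nonneg v]
  rw [normsq_clm_repr hM v, normsq_repr hM v, Finset.mul_sum] at hsq
  have hne : ∃ i₀, hM.eigenvectorBasis.repr v i₀ ≠ 0 := by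
    by_contra hc
    push_neg at hc
    apply hv
    apply hM.eigenvectorBasis.repr.injective
    ext i; simp [hc i]
  obtain ⟨i₀, hi₀⟩ := hne
  have hlt : ∑ i, α ^ 2 * ‖hM.eigenvectorBasis.repr v i‖ ^ 2
      < ∑ i, (hM.eigenvalues i) ^ 2 * ‖hM.eigenvectorBasis.repr v i‖ ^ 2 := by
    apply Finset.sum_lt_sum
    · intro i _
      have : α ^ 2 ≤ (hM.eigenvalues i) ^ 2 := by
        have h2 := h i
        have h3 : α ^ 2 < |hM.eigenvalues i| ^ 2 := by nlinarith [abs_nonneg (hM.eigenvalues i)]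
        rw [sq_abs] at h3; linarith
      exact mul_le_mul_of_nonneg_right this (by positivity)
    · refine ⟨i₀, Finset.mem_univ i₀, ?_⟩
      have h1 : α ^ 2 < (hM.eigenvalues i₀) ^ 2 := by
        have h2 := h i₀
        have h3 : α ^ 2 < |hM.eigenvalues i₀| ^ 2 := by nlinarith [abs_nonneg (hM.eigenvalues i₀)]
        rwa [sq_abs] at h3
      exact mul_lt_mul_of_pos_right h1 (pow_pos (norm_pos_iff.mpr hi₀) 2)
  linarith

lemma inner_clm_expand (M : Matrix (Fin n) (Fin n) ℂ) (v : EuclideanSpace ℂ (Fin n)) :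
    (inner ℂ ((Matrix.toEuclideanCLM (𝕜 := ℂ) M) v) v : ℂ).re
      = ∑ i, ∑ j, ((starRingEnd ℂ) (M i j) * ((starRingEnd ℂ) (v j) * v i)).re := by
  have h1 : (inner ℂ ((Matrix.toEuclideanCLM (𝕜 := ℂ) M) v) v : ℂ)
      = ∑ i, (starRingEnd ℂ) (((Matrix.toEuclideanCLM (𝕜 := ℂ) M) v) i) * v i := by
    rw [PiLp.inner_apply]
    simp only [RCLike.inner_apply']
  have h2 : ∀ i, ((Matrix.toEuclideanCLM (𝕜 := ℂ) M) v) i = ∑ j, M i j * v j := by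
    intro i
    rfl
  rw [h1, Complex.re_sum]
  congr 1; ext i
  rw [h2, map_sum, Finset.sum_mul, Complex.re_sum]
  congr 1; ext j
  rw [_root_.map_mul]
  congr 1
  ring

lemma quad_hasDeriv (J : Set ℝ) (A A' : ℝ → Matrix (Fin n) (Fin n) ℂ)
    (hderiv : ∀ ξ ∈ J, ∀ i j, HasDerivWithinAt (fun t => A t i j) (A' ξ i j) J ξ)
    (v : EuclideanSpace ℂ (Fin n)) {ξ : ℝ} (hξ : ξ ∈ J) :
    HasDerivWithinAt (fun t => (inner ℂ ((Matrix.toEuclideanCLM (𝕜 := ℂ) (A t)) v) v : ℂ).re)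
      ((inner ℂ ((Matrix.toEuclideanCLM (𝕜 := ℂ) (A' ξ)) v) v : ℂ).re) J ξ := by
  have key : ∀ (M : Matrix (Fin n) (Fin n) ℂ),
      (inner ℂ ((Matrix.toEuclideanCLM (𝕜 := ℂ) M) v) v : ℂ).re
        = ∑ i, ∑ j, ((starRingEnd ℂ) (M i j) * ((starRingEnd ℂ) (v j) * v i)).re :=
    fun M => inner_clm_expand M v
  simp only [key]
  apply HasDerivWithinAt.fun_sum
  intro i _
  apply HasDerivWithinAt.fun_sum
  intro j _
  have h1 : HasDerivWithinAt (fun t => (starRingEnd ℂ) (A t i j))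
      ((starRingEnd ℂ) (A' ξ i j)) J ξ := by
    have := (Complex.conjCLE.toContinuousLinearMap.hasFDerivAt
      (x := A ξ i j)).comp_hasDerivWithinAt ξ (hderiv ξ hξ i j)
    simpa [Function.comp_def] using this
  have h2 : HasDerivWithinAt
      (fun t => (starRingEnd ℂ) (A t i j) * ((starRingEnd ℂ) (v j) * v i))
      ((starRingEnd ℂ) (A' ξ i j) * ((starRingEnd ℂ) (v j) * v i)) J ξ :=
    h1.mul_const _
  have h3 := (Complex.reCLM.hasFDerivAt
    (x := (starRingEnd ℂ) (A ξ i j) * ((starRingEnd ℂ) (v j) * v i))).comp_hasDerivWithinAt ξ h2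
  exact h3

lemma quad_mono (J : Set ℝ) (hJ : J.OrdConnected) (A A' : ℝ → Matrix (Fin n) (Fin n) ℂ)
    (hderiv : ∀ ξ ∈ J, ∀ i j, HasDerivWithinAt (fun t => A t i j) (A' ξ i j) J ξ)
    (β : ℝ)
    (hpos : ∀ ξ ∈ J, ∀ v : EuclideanSpace ℂ (Fin n),
      β * ‖v‖ ^ 2 ≤ (inner ℂ ((Matrix.toEuclideanCLM (𝕜 := ℂ) (A' ξ)) v) v : ℂ).re)
    (v : EuclideanSpace ℂ (Fin n)) {x y : ℝ} (hx : x ∈ J) (hy : y ∈ J) (hxy : x ≤ y) :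
    (inner ℂ ((Matrix.toEuclideanCLM (𝕜 := ℂ) (A x)) v) v : ℂ).re + β * (y - x) * ‖v‖ ^ 2
      ≤ (inner ℂ ((Matrix.toEuclideanCLM (𝕜 := ℂ) (A y)) v) v : ℂ).re := by
  have hconv : Convex ℝ J := (convex_iff_ordConnected (𝕜 := ℝ)).mpr hJ
  set f : ℝ → ℝ := fun t => (inner ℂ ((Matrix.toEuclideanCLM (𝕜 := ℂ) (A t)) v) v : ℂ).re
  have hf : ∀ ξ ∈ J, HasDerivWithinAt f
      ((inner ℂ ((Matrix.toEuclideanCLM (𝕜 := ℂ) (A' ξ)) v) v : ℂ).re) J ξ :=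
    fun ξ hξ => quad_hasDeriv J A A' hderiv v hξ
  have hcont : ContinuousOn f J := fun ξ hξ => (hf ξ hξ).continuousWithinAt
  have hdiff : DifferentiableOn ℝ f (interior J) := fun ξ hξ =>
    ((hf ξ (interior_subset hξ)).mono interior_subset).differentiableWithinAt
  have hderiv_ge : ∀ ξ ∈ interior J, β * ‖v‖ ^ 2 ≤ deriv f ξ := by
    intro ξ hξ
    have hmem : J ∈ nhds ξ := mem_interior_iff_mem_nhds.mp hξ
    have := (hf ξ (interior_subset hξ)).hasDerivAt hmem
    rw [this.deriv]
    exact hpos ξ (interior_subset hξ) v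
  have := hconv.mul_sub_le_image_sub_of_le_deriv hcont hdiff hderiv_ge x hx y hy hxy
  simp only [f] at this ⊢
  linarith

end MSIL

end MSILAux

open MSIL in
/-- If `A ξ` is a `C¹` family of Hermitian `n × n` matrices on an interval `J` with
`∂_ξ A(ξ) ≥ β I` (β > 0) in the sense of quadratic forms, then for any `α > 0` the
set of `ξ ∈ J` where `A ξ` is not invertible or `‖A(ξ)⁻¹‖ ≥ α⁻¹` has Lebesgue
measure at most `2 n α β⁻¹`. -/
theorem measure_small_inverse_le
    (n : ℕ) (J : Set ℝ) (hJ : J.OrdConnected)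
    (A A' : ℝ → Matrix (Fin n) (Fin n) ℂ)
    (hherm : ∀ ξ ∈ J, (A ξ).IsHermitian)
    (hderiv : ∀ ξ ∈ J, ∀ i j, HasDerivWithinAt (fun t => A t i j) (A' ξ i j) J ξ)
    (hderiv_cont : ∀ i j, ContinuousOn (fun t => A' t i j) J)
    (β : ℝ) (hβ : 0 < β)
    (hpos : ∀ ξ ∈ J, ∀ v : EuclideanSpace ℂ (Fin n),
      β * ‖v‖ ^ 2 ≤
        (inner ℂ ((Matrix.toEuclideanCLM (𝕜 := ℂ) (A' ξ)) v) v : ℂ).re)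
    (α : ℝ) (hα : 0 < α) :
    volume {ξ ∈ J | ¬ IsUnit (A ξ) ∨
        α⁻¹ ≤ ‖(Matrix.toEuclideanCLM (𝕜 := ℂ) ((A ξ)⁻¹) :
          EuclideanSpace ℂ (Fin n) →L[ℂ] EuclideanSpace ℂ (Fin n))‖} ≤
      ENNReal.ofReal (2 * n * α * β⁻¹) := by
  classical
  set Bad : Set ℝ := {ξ ∈ J | ¬ IsUnit (A ξ) ∨
      α⁻¹ ≤ ‖(Matrix.toEuclideanCLM (𝕜 := ℂ) ((A ξ)⁻¹) :
        EuclideanSpace ℂ (Fin n) →L[ℂ] EuclideanSpace ℂ (Fin n))‖} with hBad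
  rcases Nat.eq_zero_or_pos n with hn | hn
  · -- trivial case n = 0
    subst hn
    have hempty : Bad = ∅ := by
      ext ξ
      simp only [hBad, Set.mem_setOf_eq, Set.mem_empty_iff_false, iff_false, not_and, not_or]
      intro _
      constructor
      · rw [not_not]
        have : (A ξ) = 1 := Subsingleton.elim _ _
        rw [this]; exact isUnit_one
      · have : (Matrix.toEuclideanCLM (𝕜 := ℂ) ((A ξ)⁻¹) :
            EuclideanSpace ℂ (Fin 0) →L[ℂ] EuclideanSpace ℂ (Fin 0)) = 0 :=
          Subsingleton.elim _ _
        rw [this, norm_zero]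
        exact not_le.mpr (inv_pos.mpr hα)
    rw [hempty]
    simp
  · -- main case
    -- the eigenvalue counting function
    set N : ℝ → ℕ := fun ξ =>
      if h : ξ ∈ J then (univ.filter fun i => α < (hherm ξ h).eigenvalues i).card else 0 with hN
    -- at every bad point there is a small eigenvalue
    have hsmall : ∀ ξ (hξ : ξ ∈ Bad), ∃ i, |(hherm ξ hξ.1).eigenvalues i| ≤ α := by
      intro ξ hξ
      obtain ⟨v, hv0, hv⟩ := small_vec_exists hα hn hξ.2
      exact eigen_small_of_small_vec (hherm ξ hξ.1) hα.le hv0 hv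
    -- counting function bounded by n - 1 on Bad
    have hNlt : ∀ ξ ∈ Bad, N ξ < n := by
      intro ξ hξ
      obtain ⟨i₀, hi₀⟩ := hsmall ξ hξ
      rw [hN]
      simp only [dif_pos hξ.1]
      have : (univ.filter fun i => α < (hherm ξ hξ.1).eigenvalues i) ≠ univ := by
        intro h
        have : i₀ ∈ univ.filter fun i => α < (hherm ξ hξ.1).eigenvalues i := by
          rw [h]; exact Finset.mem_univ i₀
        have h2 : α < (hherm ξ hξ.1).eigenvalues i₀ := (Finset.mem_filter.mp this).2
        have h3 := le_abs_self ((hherm ξ hξ.1).eigenvalues i₀)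
        linarith [hi₀]
      calc (univ.filter fun i => α < (hherm ξ hξ.1).eigenvalues i).card
          < (univ : Finset (Fin n)).card :=
            Finset.card_lt_card (Finset.ssubset_iff_subset_ne.mpr
              ⟨Finset.subset_univ _, this⟩)
        _ = n := by simp
    -- counting function strictly increases across large gaps in Bad
    have hstep : ∀ x ∈ Bad, ∀ y ∈ Bad, 2 * α * β⁻¹ < y - x → N x + 1 ≤ N y := by
      intro x hx y hy hgap
      have hxJ : x ∈ J := hx.1
      have hyJ : y ∈ J := hy.1
      set d : ℝ := β * (y - x) with hd
      have hd2 : 2 * α < d := by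
        rw [hd]
        have h1 : 2 * α * β⁻¹ * β < (y - x) * β := by
          apply mul_lt_mul_of_pos_right hgap hβ
        rw [mul_assoc, inv_mul_cancel₀ hβ.ne', mul_one] at h1
        linarith [h1]
      have hxy : x ≤ y := by nlinarith [mul_pos (mul_pos two_pos hα) (inv_pos.mpr hβ)]
      have hq : ∀ v : EuclideanSpace ℂ (Fin n),
          (inner ℂ ((Matrix.toEuclideanCLM (𝕜 := ℂ) (A x)) v) v : ℂ).re + d * ‖v‖ ^ 2
            ≤ (inner ℂ ((Matrix.toEuclideanCLM (𝕜 := ℂ) (A y)) v) v : ℂ).re := by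
        intro v
        have := quad_mono J hJ A A' hderiv β hpos v hxJ hyJ hxy
        rw [hd]
        linarith [this]
      have hcount := count_le (hherm y hyJ) (hherm x hxJ)
        (c := α - d) (c' := α) (d := d) (by linarith) hq
      -- N x + 1 ≤ card (filter (α - d < eigenvalues x))
      obtain ⟨i₀, hi₀⟩ := hsmall x hx
      have habs1 : -α ≤ (hherm x hxJ).eigenvalues i₀ := neg_le_of_abs_le hi₀
      have habs2 : (hherm x hxJ).eigenvalues i₀ ≤ α := le_of_abs_le hi₀
      have hss : (univ.filter fun i => α < (hherm x hxJ).eigenvalues i)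
          ⊂ (univ.filter fun i => α - d < (hherm x hxJ).eigenvalues i) := by
        constructor
        · intro i hi
          rw [Finset.mem_filter] at hi ⊢
          exact ⟨hi.1, by linarith [hi.2]⟩
        · intro hsub
          have hmem : i₀ ∈ univ.filter fun i => α - d < (hherm x hxJ).eigenvalues i := by
            rw [Finset.mem_filter]
            exact ⟨Finset.mem_univ _, by linarith⟩
          have := hsub hmem
          rw [Finset.mem_filter] at this
          linarith [this.2]
      have hcard := Finset.card_lt_card hss
      rw [hN]
      simp only [dif_pos hxJ, dif_pos hyJ]
      omega
    -- decompose Bad by the value of N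
    have hcover : Bad ⊆ ⋃ k ∈ Finset.range n, {ξ ∈ Bad | N ξ = k} := by
      intro ξ hξ
      simp only [Set.mem_iUnion]
      exact ⟨N ξ, by simpa using (hNlt ξ hξ), hξ, rfl⟩
    -- each piece has small diameter
    have hdiam : ∀ k, volume {ξ ∈ Bad | N ξ = k} ≤ ENNReal.ofReal (2 * α * β⁻¹) := by
      intro k
      refine le_trans (Real.volume_le_diam _) ?_
      apply EMetric.diam_le
      intro x hx y hy
      rw [edist_dist]
      apply ENNReal.ofReal_le_ofReal
      rw [Real.dist_eq]
      obtain ⟨hxB, hxk⟩ := hx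
      obtain ⟨hyB, hyk⟩ := hy
      rcases le_total x y with hxy | hxy
      · rw [abs_of_nonpos (by linarith)]
        by_contra hc
        push_neg at hc
        have hg : 2 * α * β⁻¹ < y - x := by linarith
        have := hstep x hxB y hyB hg
        omega
      · rw [abs_of_nonneg (by linarith)]
        by_contra hc
        push_neg at hc
        have hg : 2 * α * β⁻¹ < x - y := by linarith
        have := hstep y hyB x hxB hg
        omega
    -- combine
    calc volume Bad ≤ volume (⋃ k ∈ Finset.range n, {ξ ∈ Bad | N ξ = k}) :=
          measure_mono hcover
      _ ≤ ∑ k ∈ Finset.range n, volume {ξ ∈ Bad | N ξ = k} :=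
          measure_biUnion_finset_le _ _
      _ ≤ ∑ k ∈ Finset.range n, ENNReal.ofReal (2 * α * β⁻¹) :=
          Finset.sum_le_sum fun k _ => hdiam k
      _ = n * ENNReal.ofReal (2 * α * β⁻¹) := by
          rw [Finset.sum_const, Finset.card_range, nsmul_eq_mul]
      _ = ENNReal.ofReal (2 * n * α * β⁻¹) := by
          rw [← ENNReal.ofReal_natCast n, ← ENNReal.ofReal_mul (by positivity)]
          congr 1
          ring
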